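/- arXiv:2009.11544 — 5 statements merged into one kernel-verified Lean document; each statement's English description precedes it below -/
import Mathlib

section
/- Let H be a complex Hilbert space, f ∈ H, (g_j)_{j∈ℕ} a pairwise orthogonal family of vectors of H with ∑_{j=0}^∞ ‖g_j‖² ≤ ‖f‖², and (ω_j)_{j∈ℕ} a sequence of real numbers. Then: (i) for every t ≥ 0 the series u(t) := ∑_{j=0}^∞ e^{i ω_j t} g_j converges in H; (ii) for every s ∈ ℂ with Re s > 0 the function t ↦ e^{-s t} u(t) is Bochner integrable on [0,∞), the series ∑_{j=0}^∞ (s − i ω_j)^{-1} g_j converges in H, and ∫_0^∞ e^{-s t} u(t) dt = ∑_{j=0}^∞ (s − i ω_j)^{-1} g_j. (This is the point-spectrum part of the spectral expansion of the Koopman resolvent for ergodic on-attractor evolution, where g_j = P_j f are the orthogonal spectral projections of the observable and i ω_j are the purely imaginary Koopman eigenvalues.) -/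
open MeasureTheory
open scoped InnerProductSpace

lemma cexp_integrableOn_aux {c : ℂ} (hc : 0 < c.re) :
    IntegrableOn (fun t : ℝ => Complex.exp (-(c * t))) (Set.Ioi 0) := by
  have hcont : Continuous fun t : ℝ => Complex.exp (-(c * t)) := by continuity
  refine Integrable.mono' ((exp_neg_integrableOn_Ioi 0 hc)) hcont.aestronglyMeasurable ?_
  filter_upwards with t
  rw [Complex.norm_exp]
  simp [Complex.mul_re, neg_mul]

lemma cexp_integral_aux {c : ℂ} (hc : 0 < c.re) :
    ∫ t in Set.Ioi (0 : ℝ), Complex.exp (-(c * t)) = c⁻¹ := by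
  have hc0 : c ≠ 0 := fun h => by simp [h] at hc
  have h1 := intervalIntegral_tendsto_integral_Ioi 0 (cexp_integrableOn_aux hc)
    (Filter.tendsto_id (α := ℝ))
  have h2 : Filter.Tendsto (fun b : ℝ => ∫ t in (0:ℝ)..(id b), Complex.exp (-(c * t)))
      Filter.atTop (nhds c⁻¹) := by
    have heq : ∀ b : ℝ, (∫ t in (0:ℝ)..(id b), Complex.exp (-(c * t)))
        = (Complex.exp (-c * b) - Complex.exp (-c * 0)) / (-c) := by
      intro b
      rw [show (fun t : ℝ => Complex.exp (-(c * t))) = fun t : ℝ => Complex.exp ((-c) * t) by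
        funext t; ring_nf]
      exact integral_exp_mul_complex (neg_ne_zero.mpr hc0)
    simp only [heq]
    have hlim : Filter.Tendsto (fun b : ℝ => Complex.exp (-c * b)) Filter.atTop (nhds 0) := by
      rw [tendsto_zero_iff_norm_tendsto_zero]
      simp only [Complex.norm_exp]
      have hre : ∀ b : ℝ, ((-c) * (b:ℂ)).re = -(c.re * b) := by
        intro b; simp [Complex.mul_re]
      simp only [hre]
      apply Real.tendsto_exp_atBot.comp
      exact Filter.tendsto_neg_atBot_iff.mpr (Filter.Tendsto.const_mul_atTop hc Filter.tendsto_id)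
    have : Filter.Tendsto (fun b : ℝ => (Complex.exp (-c * b) - Complex.exp (-c * 0)) / (-c))
        Filter.atTop (nhds ((0 - Complex.exp (-c * 0)) / (-c))) :=
      ((hlim.sub tendsto_const_nhds).div_const _)
    simpa [hc0] using this
  exact tendsto_nhds_unique h1 h2


/-- Point-spectrum part of the spectral expansion of the Koopman resolvent for
ergodic on-attractor evolution: `g j = P j f` are the orthogonal spectral
projections of the observable `f` and `i ω j` the purely imaginary Koopman
eigenvalues. -/
theorem koopman_resolvent_on_attractor_point_spectrum
    {H : Type*} [NormedAddCommGroup H] [InnerProductSpace ℂ H] [CompleteSpace H]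
    (f : H) (g : ℕ → H) (ω : ℕ → ℝ)
    (horth : Pairwise fun j k => ⟪g j, g k⟫_ℂ = 0)
    (hsum : Summable fun j => ‖g j‖ ^ 2)
    (hbound : ∑' j, ‖g j‖ ^ 2 ≤ ‖f‖ ^ 2) :
    (∀ t : ℝ, 0 ≤ t →
      Summable fun j => Complex.exp (Complex.I * (ω j) * t) • g j) ∧
    ∀ s : ℂ, 0 < s.re →
      IntegrableOn
        (fun t : ℝ =>
          Complex.exp (-s * t) • ∑' j, Complex.exp (Complex.I * (ω j) * t) • g j)
        (Set.Ioi 0) ∧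
      (Summable fun j => (s - Complex.I * (ω j))⁻¹ • g j) ∧
      ∫ t in Set.Ioi (0 : ℝ),
          Complex.exp (-s * t) • ∑' j, Complex.exp (Complex.I * (ω j) * t) • g j
        = ∑' j, (s - Complex.I * (ω j))⁻¹ • g j := by
  classical
  -- the orthogonal family of spans
  have hV : OrthogonalFamily ℂ (fun j => (ℂ ∙ g j : Submodule ℂ H))
      (fun j => (ℂ ∙ g j).subtypeₗᵢ) := by
    intro i j hij v w
    obtain ⟨a, ha⟩ := Submodule.mem_span_singleton.1 v.2
    obtain ⟨b, hb⟩ := Submodule.mem_span_singleton.1 w.2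
    show ⟪(v : H), (w : H)⟫_ℂ = 0
    rw [← ha, ← hb, inner_smul_left, inner_smul_right, horth hij]
    ring
  -- summability for bounded coefficients
  have key : ∀ (C : ℝ) (c : ℕ → ℂ), (∀ j, ‖c j‖ ≤ C) →
      Summable fun j => c j • g j := by
    intro C c hc
    have hmem : ∀ j, c j • g j ∈ (ℂ ∙ g j : Submodule ℂ H) := fun j =>
      Submodule.smul_mem _ _ (Submodule.mem_span_singleton_self _)
    have := (hV.summable_iff_norm_sq_summable
      (fun j => (⟨c j • g j, hmem j⟩ : (ℂ ∙ g j : Submodule ℂ H)))).2 ?_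
    · exact this
    · refine Summable.of_nonneg_of_le (fun j => sq_nonneg _) (fun j => ?_) (hsum.mul_left (C^2))
      show ‖c j • g j‖ ^ 2 ≤ C ^ 2 * ‖g j‖ ^ 2
      rw [norm_smul, mul_pow]
      have h0 : 0 ≤ C := le_trans (norm_nonneg _) (hc 0)
      gcongr
      exact hc j
  -- bound on partial sums with coefficients of norm ≤ 1
  have keybound : ∀ (c : ℕ → ℂ), (∀ j, ‖c j‖ ≤ 1) → ∀ n : ℕ,
      ‖∑ j ∈ Finset.range n, c j • g j‖ ≤ ‖f‖ := by
    intro c hc n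
    have hmem : ∀ j, c j • g j ∈ (ℂ ∙ g j : Submodule ℂ H) := fun j =>
      Submodule.smul_mem _ _ (Submodule.mem_span_singleton_self _)
    have hsq : ‖∑ j ∈ Finset.range n, c j • g j‖ ^ 2
        = ∑ j ∈ Finset.range n, ‖c j • g j‖ ^ 2 :=
      hV.norm_sum (fun j => (⟨c j • g j, hmem j⟩ : (ℂ ∙ g j : Submodule ℂ H))) (Finset.range n)
    have h1 : ‖∑ j ∈ Finset.range n, c j • g j‖ ^ 2 ≤ ‖f‖ ^ 2 := by
      rw [hsq]
      calc ∑ j ∈ Finset.range n, ‖c j • g j‖ ^ 2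
          ≤ ∑ j ∈ Finset.range n, ‖g j‖ ^ 2 := by
            refine Finset.sum_le_sum fun j _ => ?_
            rw [norm_smul, mul_pow]
            have h1 : ‖c j‖ ^ 2 ≤ 1 := by
              have := pow_le_pow_left₀ (norm_nonneg (c j)) (hc j) 2
              simpa using this
            nlinarith [sq_nonneg (‖g j‖)]
        _ ≤ ∑' j, ‖g j‖ ^ 2 :=
            Summable.sum_le_tsum _ (fun j _ => sq_nonneg _) hsum
        _ ≤ ‖f‖ ^ 2 := hbound
    exact le_of_pow_le_pow_left₀ two_ne_zero (norm_nonneg f) h1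
  -- unimodular coefficients
  have hunit : ∀ (t : ℝ) (j : ℕ), ‖Complex.exp (Complex.I * (ω j) * t)‖ = 1 := by
    intro t j
    rw [Complex.norm_exp]
    have : (Complex.I * (ω j) * t).re = 0 := by simp [Complex.mul_re]
    rw [this, Real.exp_zero]
  have hsummable1 : ∀ t : ℝ, Summable fun j => Complex.exp (Complex.I * (ω j) * t) • g j :=
    fun t => key 1 _ (fun j => le_of_eq (hunit t j))
  refine ⟨fun t _ => hsummable1 t, fun s hs => ?_⟩
  set u : ℝ → H := fun t => ∑' j, Complex.exp (Complex.I * (ω j) * t) • g j with hu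
  set P : ℕ → ℝ → H := fun n t => ∑ j ∈ Finset.range n, Complex.exp (Complex.I * (ω j) * t) • g j
    with hP
  have hPtend : ∀ t : ℝ, Filter.Tendsto (fun n => P n t) Filter.atTop (nhds (u t)) :=
    fun t => (hsummable1 t).hasSum.tendsto_sum_nat
  have hPcont : ∀ n, Continuous (P n) := by
    intro n
    exact continuous_finset_sum _ fun j _ =>
      ((Complex.continuous_exp.comp (continuous_const.mul Complex.continuous_ofReal)).smul
        continuous_const)
  have humeas : StronglyMeasurable u :=
    stronglyMeasurable_of_tendsto Filter.atTop (fun n => (hPcont n).stronglyMeasurable)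
      (tendsto_pi_nhds.2 hPtend)
  have hubound : ∀ t : ℝ, ‖u t‖ ≤ ‖f‖ := by
    intro t
    refine le_of_tendsto ((hPtend t).norm) ?_
    filter_upwards with n
    exact keybound _ (fun j => le_of_eq (hunit t j)) n
  have hexps : Continuous fun t : ℝ => Complex.exp (-s * t) :=
    Complex.continuous_exp.comp (continuous_const.mul Complex.continuous_ofReal)
  have hnorm_exps : ∀ t : ℝ, ‖Complex.exp (-s * t)‖ = Real.exp (-(s.re * t)) := by
    intro t
    rw [Complex.norm_exp]
    congr 1
    simp [Complex.mul_re]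
  -- the dominating bound
  have hbd_int : Integrable (fun t : ℝ => Real.exp (-s.re * t) * ‖f‖)
      (volume.restrict (Set.Ioi (0:ℝ))) :=
    (exp_neg_integrableOn_Ioi 0 hs).mul_const _
  -- integrability of the limit
  have hint : IntegrableOn (fun t : ℝ => Complex.exp (-s * t) • u t) (Set.Ioi 0) := by
    refine Integrable.mono' hbd_int
      ((hexps.stronglyMeasurable.smul humeas).aestronglyMeasurable) ?_
    filter_upwards with t
    rw [norm_smul, hnorm_exps t, neg_mul]
    exact mul_le_mul_of_nonneg_left (hubound t) (Real.exp_nonneg _)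
  -- summability of the resolvent series
  have hres_norm : ∀ j, ‖(s - Complex.I * (ω j))⁻¹‖ ≤ (s.re)⁻¹ := by
    intro j
    rw [norm_inv]
    have hre : (s - Complex.I * (ω j)).re = s.re := by simp [Complex.mul_re]
    have h1 : s.re ≤ ‖s - Complex.I * (ω j)‖ := by
      rw [← hre]
      exact le_trans (le_abs_self _) (Complex.abs_re_le_norm _)
    exact inv_anti₀ hs h1
  have hsummable2 : Summable fun j => (s - Complex.I * (ω j))⁻¹ • g j :=
    key (s.re)⁻¹ _ hres_norm
  refine ⟨hint, hsummable2, ?_⟩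
  -- each term is integrable with known integral
  have hterm : ∀ j : ℕ,
      (∫ t in Set.Ioi (0:ℝ), Complex.exp (-s * t) • (Complex.exp (Complex.I * (ω j) * t) • g j))
        = (s - Complex.I * (ω j))⁻¹ • g j ∧
      IntegrableOn (fun t : ℝ =>
        Complex.exp (-s * t) • (Complex.exp (Complex.I * (ω j) * t) • g j)) (Set.Ioi 0) := by
    intro j
    have hcre : 0 < (s - Complex.I * (ω j)).re := by
      have : (s - Complex.I * (ω j)).re = s.re := by simp [Complex.mul_re]
      rw [this]; exact hs
    have heq : (fun t : ℝ => Complex.exp (-s * t) • (Complex.exp (Complex.I * (ω j) * t) • g j))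
        = fun t : ℝ => Complex.exp (-((s - Complex.I * (ω j)) * t)) • g j := by
      funext t
      rw [smul_smul, ← Complex.exp_add]
      congr 2
      ring
    constructor
    · rw [heq, integral_smul_const, cexp_integral_aux hcre]
    · rw [heq]
      exact (cexp_integrableOn_aux hcre).smul_const _
  -- dominated convergence
  have hDC : Filter.Tendsto
      (fun n => ∫ t in Set.Ioi (0:ℝ), Complex.exp (-s * t) • P n t)
      Filter.atTop (nhds (∫ t in Set.Ioi (0:ℝ), Complex.exp (-s * t) • u t)) := by
    refine tendsto_integral_of_dominated_convergence (fun t => Real.exp (-s.re * t) * ‖f‖)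
      (fun n => (hexps.smul (hPcont n)).aestronglyMeasurable) hbd_int (fun n => ?_) ?_
    · filter_upwards with t
      rw [norm_smul, hnorm_exps t, neg_mul]
      exact mul_le_mul_of_nonneg_left
        (keybound _ (fun j => le_of_eq (hunit t j)) n) (Real.exp_nonneg _)
    · filter_upwards with t
      exact (hPtend t).const_smul _
  -- compute the partial integrals
  have hcompute : ∀ n, (∫ t in Set.Ioi (0:ℝ), Complex.exp (-s * t) • P n t)
      = ∑ j ∈ Finset.range n, (s - Complex.I * (ω j))⁻¹ • g j := by
    intro n
    have : (fun t : ℝ => Complex.exp (-s * t) • P n t)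
        = fun t : ℝ => ∑ j ∈ Finset.range n,
            Complex.exp (-s * t) • (Complex.exp (Complex.I * (ω j) * t) • g j) := by
      funext t
      rw [hP]
      exact Finset.smul_sum
    rw [this, integral_finset_sum _ (fun j _ => (hterm j).2)]
    exact Finset.sum_congr rfl fun j _ => (hterm j).1
  have h2 : Filter.Tendsto (fun n => ∑ j ∈ Finset.range n, (s - Complex.I * (ω j))⁻¹ • g j)
      Filter.atTop (nhds (∑' j, (s - Complex.I * (ω j))⁻¹ • g j)) :=
    hsummable2.hasSum.tendsto_sum_nat
  simp only [hcompute] at hDC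
  exact tendsto_nhds_unique hDC h2
end

section
/- Let H be a complex Hilbert space, n ∈ ℕ, and λ : Fin n → ℂ with Re λ_i < 0 for every i. Let g : (Fin n → ℕ) → H be a family of vectors, indexed by multi-indices α ∈ ℕ₀^n, that is pairwise orthogonal and satisfies ∑_α ‖g_α‖² < ∞. For a multi-index α set Λ(α) := ∑_{i} α_i λ_i. Then: (i) for every t ≥ 0 the series u(t) := ∑_α e^{Λ(α) t} g_α converges in H; (ii) for every s ∈ ℂ with Re s > 0 the function t ↦ e^{-s t} u(t) is Bochner integrable on [0,∞), the series ∑_α (s − Λ(α))^{-1} g_α converges in H, and ∫_0^∞ e^{-s t} u(t) dt = ∑_α (s − Λ(α))^{-1} g_α. (This is the spectral expansion of the Koopman resolvent for dynamics converging to a stable hyperbolic equilibrium, where λ_1,…,λ_n are the principal Koopman eigenvalues with negative real parts and g_α = P_α f are the orthogonal spectral projections of the observable in the modulated Segal–Bargmann space.) -/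
open MeasureTheory
open scoped InnerProductSpace

private lemma integrableOn_cexp_Ioi {z : ℂ} (hz : z.re < 0) :
    IntegrableOn (fun t : ℝ => Complex.exp (z * t)) (Set.Ioi 0) := by
  have hcont : Continuous fun t : ℝ => Complex.exp (z * t) :=
    Complex.continuous_exp.comp (continuous_const.mul Complex.continuous_ofReal)
  refine Integrable.mono' (exp_neg_integrableOn_Ioi 0 (show (0:ℝ) < -z.re by linarith))
    hcont.aestronglyMeasurable ?_
  filter_upwards with t
  have : ‖Complex.exp (z * t)‖ = Real.exp (z.re * t) := by
    rw [Complex.norm_exp]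
    congr 1
    simp [Complex.mul_re]
  rw [this]
  apply le_of_eq
  congr 1
  ring

private lemma integral_cexp_Ioi {z : ℂ} (hz : z.re < 0) :
    ∫ t : ℝ in Set.Ioi 0, Complex.exp (z * t) = -z⁻¹ := by
  have hz0 : z ≠ 0 := by
    intro h; rw [h] at hz; simp at hz
  have hderiv : ∀ x ∈ Set.Ici (0:ℝ), HasDerivAt (fun t : ℝ => z⁻¹ * Complex.exp (z * t))
      (Complex.exp (z * x)) x := by
    intro x _
    have h1 : HasDerivAt (fun t : ℝ => z * (t : ℂ)) z x := by
      simpa using (Complex.ofRealCLM.hasDerivAt (x := x)).const_mul z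
    have h2 := h1.cexp
    have h3 := h2.const_mul z⁻¹
    exact h3.congr_deriv (by
      rw [mul_comm (Complex.exp (z * x)) z, ← mul_assoc, inv_mul_cancel₀ hz0, one_mul])
  have hlim : Filter.Tendsto (fun t : ℝ => z⁻¹ * Complex.exp (z * t)) Filter.atTop (nhds 0) := by
    rw [tendsto_zero_iff_norm_tendsto_zero]
    have hn : ∀ t : ℝ, ‖z⁻¹ * Complex.exp (z * t)‖ = ‖z⁻¹‖ * Real.exp (z.re * t) := by
      intro t
      rw [norm_mul, Complex.norm_exp]
      congr 2
      simp [Complex.mul_re]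
    simp only [hn]
    have h4 : Filter.Tendsto (fun t : ℝ => Real.exp (z.re * t)) Filter.atTop (nhds 0) := by
      have h5 : Filter.Tendsto (fun t : ℝ => (-z.re) * t) Filter.atTop Filter.atTop :=
        Filter.Tendsto.const_mul_atTop (by linarith) Filter.tendsto_id
      have := Real.tendsto_exp_neg_atTop_nhds_zero.comp h5
      refine this.congr fun t => ?_
      simp [Function.comp, neg_mul]
    simpa using h4.const_mul ‖z⁻¹‖
  have := integral_Ioi_of_hasDerivAt_of_tendsto' hderiv (integrableOn_cexp_Ioi hz) hlim
  rw [this]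
  simp

/-- Spectral expansion of the Koopman resolvent for dynamics converging to a
stable hyperbolic equilibrium: `lam 0, …, lam (n-1)` are the principal Koopman
eigenvalues (with negative real parts) and `g α = P α f` are the orthogonal
spectral projections of the observable in the modulated Segal–Bargmann space,
indexed by multi-indices `α : Fin n → ℕ`. -/
theorem koopman_resolvent_stable_equilibrium
    {H : Type*} [NormedAddCommGroup H] [InnerProductSpace ℂ H] [CompleteSpace H]
    (n : ℕ) (lam : Fin n → ℂ) (hlam : ∀ i, (lam i).re < 0)
    (g : (Fin n → ℕ) → H)
    (horth : Pairwise fun α β => ⟪g α, g β⟫_ℂ = 0)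
    (hsum : Summable fun α => ‖g α‖ ^ 2) :
    (∀ t : ℝ, 0 ≤ t →
      Summable fun α : Fin n → ℕ =>
        Complex.exp ((∑ i, (α i : ℂ) * lam i) * t) • g α) ∧
    ∀ s : ℂ, 0 < s.re →
      IntegrableOn
        (fun t : ℝ =>
          Complex.exp (-s * t) •
            ∑' α : Fin n → ℕ, Complex.exp ((∑ i, (α i : ℂ) * lam i) * t) • g α)
        (Set.Ioi 0) ∧
      (Summable fun α : Fin n → ℕ => (s - ∑ i, (α i : ℂ) * lam i)⁻¹ • g α) ∧
      ∫ t in Set.Ioi (0 : ℝ),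
          Complex.exp (-s * t) •
            ∑' α : Fin n → ℕ, Complex.exp ((∑ i, (α i : ℂ) * lam i) * t) • g α
        = ∑' α : Fin n → ℕ, (s - ∑ i, (α i : ℂ) * lam i)⁻¹ • g α := by
  classical
  set Λ : (Fin n → ℕ) → ℂ := fun α => ∑ i, (α i : ℂ) * lam i with hΛdef
  have hΛre : ∀ α, (Λ α).re ≤ 0 := by
    intro α
    rw [hΛdef]
    simp only [Complex.re_sum]
    apply Finset.sum_nonpos
    intro i _
    have h1 : ((α i : ℂ) * lam i).re = (α i : ℝ) * (lam i).re := by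
      simp [Complex.mul_re]
    rw [h1]
    exact mul_nonpos_of_nonneg_of_nonpos (Nat.cast_nonneg _) (hlam i).le
  -- orthogonal family setup
  set G : (Fin n → ℕ) → Submodule ℂ H := fun α => ℂ ∙ g α with hGdef
  set V : ∀ α, G α →ₗᵢ[ℂ] H := fun α => (G α).subtypeₗᵢ with hVdef
  have hV : OrthogonalFamily ℂ (fun α => ↥(G α)) V := by
    intro α β hne x y
    obtain ⟨c, hc⟩ := Submodule.mem_span_singleton.mp x.2
    obtain ⟨d, hd⟩ := Submodule.mem_span_singleton.mp y.2
    show ⟪(x : H), (y : H)⟫_ℂ = 0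
    rw [← hc, ← hd, inner_smul_left, inner_smul_right, horth hne, mul_zero, mul_zero]
  set e : ∀ α, G α := fun α => ⟨g α, Submodule.mem_span_singleton_self _⟩ with hedef
  have hVe : ∀ α (c : ℂ), V α (c • e α) = c • g α := fun α c => rfl
  have hne : ∀ α (c : ℂ), ‖c • e α‖ = ‖c‖ * ‖g α‖ := by
    intro α c
    rw [norm_smul]
    rfl
  -- key summability lemma
  have key : ∀ (c : (Fin n → ℕ) → ℂ) (C : ℝ), (∀ α, ‖c α‖ ≤ C) →
      Summable fun α => c α • g α := by
    intro c C hC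
    have hsq : Summable fun α => ‖c α • e α‖ ^ 2 := by
      refine Summable.of_nonneg_of_le (fun α => sq_nonneg _) ?_ (hsum.mul_left (C ^ 2))
      intro α
      rw [hne, mul_pow]
      have : ‖c α‖ ^ 2 ≤ C ^ 2 := by
        have h0 : (0:ℝ) ≤ ‖c α‖ := norm_nonneg _
        nlinarith [hC α]
      nlinarith [sq_nonneg ‖g α‖]
    have := (hV.summable_iff_norm_sq_summable (fun α => c α • e α)).mpr hsq
    exact this.congr fun α => hVe α (c α)
  have M_def : (0:ℝ) ≤ Real.sqrt (∑' α, ‖g α‖ ^ 2) := Real.sqrt_nonneg _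
  set M : ℝ := Real.sqrt (∑' α, ‖g α‖ ^ 2) with hMdef
  -- bound on finite partial sums
  have normsum : ∀ (c : (Fin n → ℕ) → ℂ) (C : ℝ), 0 ≤ C → (∀ α, ‖c α‖ ≤ C) →
      ∀ F : Finset (Fin n → ℕ), ‖∑ α ∈ F, c α • g α‖ ≤ C * M := by
    intro c C hC0 hC F
    have h1 : ‖∑ α ∈ F, c α • g α‖ ^ 2 = ∑ α ∈ F, ‖c α • e α‖ ^ 2 := by
      have := hV.norm_sum (fun α => c α • e α) F
      simpa [hVe] using this
    have h2 : ∑ α ∈ F, ‖c α • e α‖ ^ 2 ≤ C ^ 2 * ∑' α, ‖g α‖ ^ 2 := by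
      have h3 : ∑ α ∈ F, ‖c α • e α‖ ^ 2 ≤ ∑ α ∈ F, C ^ 2 * ‖g α‖ ^ 2 := by
        apply Finset.sum_le_sum
        intro α _
        rw [hne, mul_pow]
        have : ‖c α‖ ^ 2 ≤ C ^ 2 := by nlinarith [hC α, norm_nonneg (c α)]
        nlinarith [sq_nonneg ‖g α‖]
      have h4 : ∑ α ∈ F, C ^ 2 * ‖g α‖ ^ 2 ≤ C ^ 2 * ∑' α, ‖g α‖ ^ 2 := by
        rw [← Finset.mul_sum]
        apply mul_le_mul_of_nonneg_left _ (sq_nonneg C)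
        exact hsum.sum_le_tsum F (fun α _ => sq_nonneg _)
      linarith
    calc ‖∑ α ∈ F, c α • g α‖ = Real.sqrt (‖∑ α ∈ F, c α • g α‖ ^ 2) := by
          rw [Real.sqrt_sq (norm_nonneg _)]
      _ ≤ Real.sqrt (C ^ 2 * ∑' α, ‖g α‖ ^ 2) := by
          apply Real.sqrt_le_sqrt; rw [h1]; exact h2
      _ = C * M := by
          rw [Real.sqrt_mul (sq_nonneg C), Real.sqrt_sq hC0, hMdef]
  -- coefficient bounds
  have hexp_bound : ∀ (t : ℝ), 0 ≤ t → ∀ α, ‖Complex.exp (Λ α * t)‖ ≤ 1 := by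
    intro t ht α
    rw [Complex.norm_exp, Real.exp_le_one_iff]
    have : (Λ α * t).re = (Λ α).re * t := by simp [Complex.mul_re]
    rw [this]
    exact mul_nonpos_of_nonpos_of_nonneg (hΛre α) ht
  -- Part (i)
  have part1 : ∀ t : ℝ, 0 ≤ t → Summable fun α => Complex.exp (Λ α * t) • g α :=
    fun t ht => key _ 1 (hexp_bound t ht)
  refine ⟨part1, ?_⟩
  intro s hs
  set u : ℝ → H := fun t => ∑' α, Complex.exp (Λ α * t) • g α with hudef
  -- measurability of u
  have hFcont : ∀ F : Finset (Fin n → ℕ),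
      Continuous fun t : ℝ => ∑ α ∈ F, Complex.exp (Λ α * t) • g α := by
    intro F
    apply continuous_finset_sum
    intro α _
    exact (Complex.continuous_exp.comp (continuous_const.mul Complex.continuous_ofReal)).smul
      continuous_const
  have hu_meas : AEStronglyMeasurable u (volume.restrict (Set.Ioi 0)) := by
    refine aestronglyMeasurable_of_tendsto_ae (Filter.atTop : Filter (Finset (Fin n → ℕ)))
      (f := fun F (t : ℝ) => ∑ α ∈ F, Complex.exp (Λ α * t) • g α)
      (fun F => by simpa using (hFcont F).aestronglyMeasurable) ?_
    filter_upwards [ae_restrict_mem measurableSet_Ioi] with t ht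
    exact (part1 t (le_of_lt ht)).hasSum
  have hu_bound : ∀ t : ℝ, 0 ≤ t → ‖u t‖ ≤ M := by
    intro t ht
    have hsm : Filter.Tendsto (fun F : Finset (Fin n → ℕ) =>
        ∑ α ∈ F, Complex.exp (Λ α * t) • g α) Filter.atTop (nhds (u t)) :=
      (part1 t ht).hasSum
    have hn := (continuous_norm.tendsto (u t)).comp hsm
    refine le_of_tendsto hn (Filter.Eventually.of_forall fun F => ?_)
    simpa using normsum _ 1 zero_le_one (hexp_bound t ht) F
  -- integrability of the integrand
  have hsre : ∀ α, (Λ α - s).re < 0 := by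
    intro α
    have := hΛre α
    simp only [Complex.sub_re]
    linarith
  have hnorm_exp_s : ∀ t : ℝ, ‖Complex.exp (-s * t)‖ = Real.exp (-s.re * t) := by
    intro t
    rw [Complex.norm_exp]
    congr 1
    simp [Complex.mul_re]
  have hbound_int : Integrable (fun t : ℝ => M * Real.exp (-s.re * t))
      (volume.restrict (Set.Ioi 0)) :=
    (exp_neg_integrableOn_Ioi 0 hs).const_mul M
  have hcont_s : Continuous fun t : ℝ => Complex.exp (-s * t) :=
    Complex.continuous_exp.comp (continuous_const.mul Complex.continuous_ofReal)
  have hint : IntegrableOn (fun t : ℝ => Complex.exp (-s * t) • u t) (Set.Ioi 0) := by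
    refine Integrable.mono' hbound_int (hcont_s.aestronglyMeasurable.smul hu_meas) ?_
    filter_upwards [ae_restrict_mem measurableSet_Ioi] with t ht
    rw [norm_smul, hnorm_exp_s]
    calc Real.exp (-s.re * t) * ‖u t‖ ≤ Real.exp (-s.re * t) * M :=
          mul_le_mul_of_nonneg_left (hu_bound t ht.le) (Real.exp_nonneg _)
      _ = M * Real.exp (-s.re * t) := mul_comm _ _
  -- resolvent coefficient bound
  have hres : ∀ α, ‖(s - Λ α)⁻¹‖ ≤ (s.re)⁻¹ := by
    intro α
    rw [norm_inv]
    apply inv_anti₀ hs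
    calc s.re ≤ (s - Λ α).re := by
          simp only [Complex.sub_re]
          linarith [hΛre α]
      _ ≤ ‖s - Λ α‖ := by
          exact Complex.re_le_norm _
  have hres_sum : Summable fun α => (s - Λ α)⁻¹ • g α := key _ _ hres
  refine ⟨hint, hres_sum, ?_⟩
  -- integral of each term
  have hφint : ∀ α, IntegrableOn (fun t : ℝ => Complex.exp ((Λ α - s) * t) • g α)
      (Set.Ioi 0) := fun α => (integrableOn_cexp_Ioi (hsre α)).smul_const (g α)
  have hφeq : ∀ α (t : ℝ), Complex.exp (-s * t) • Complex.exp (Λ α * t) • g α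
      = Complex.exp ((Λ α - s) * t) • g α := by
    intro α t
    rw [smul_smul, ← Complex.exp_add]
    ring_nf
  have hFint : ∀ F : Finset (Fin n → ℕ),
      ∫ t in Set.Ioi (0:ℝ), Complex.exp (-s * t) • ∑ α ∈ F, Complex.exp (Λ α * t) • g α
        = ∑ α ∈ F, (s - Λ α)⁻¹ • g α := by
    intro F
    have heq : ∀ t : ℝ, Complex.exp (-s * t) • ∑ α ∈ F, Complex.exp (Λ α * t) • g α
        = ∑ α ∈ F, Complex.exp ((Λ α - s) * t) • g α := by
      intro t
      rw [Finset.smul_sum]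
      exact Finset.sum_congr rfl fun α _ => hφeq α t
    simp_rw [heq]
    rw [integral_finset_sum F (fun α _ => hφint α)]
    refine Finset.sum_congr rfl fun α _ => ?_
    rw [integral_smul_const, integral_cexp_Ioi (hsre α)]
    congr 1
    rw [← inv_neg, neg_sub]
  -- dominated convergence
  have hT1 : Filter.Tendsto (fun F : Finset (Fin n → ℕ) =>
      ∫ t in Set.Ioi (0:ℝ), Complex.exp (-s * t) • ∑ α ∈ F, Complex.exp (Λ α * t) • g α)
      Filter.atTop (nhds (∫ t in Set.Ioi (0:ℝ), Complex.exp (-s * t) • u t)) := by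
    refine tendsto_integral_filter_of_dominated_convergence
      (fun t => M * Real.exp (-s.re * t)) ?_ ?_ hbound_int ?_
    · filter_upwards with F
      exact (hcont_s.smul (hFcont F)).aestronglyMeasurable
    · filter_upwards with F
      filter_upwards [ae_restrict_mem measurableSet_Ioi] with t ht
      rw [norm_smul, hnorm_exp_s]
      have h1 : ‖∑ α ∈ F, Complex.exp (Λ α * t) • g α‖ ≤ M := by
        simpa using normsum _ 1 zero_le_one (hexp_bound t ht.le) F
      calc Real.exp (-s.re * t) * ‖∑ α ∈ F, Complex.exp (Λ α * t) • g α‖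
          ≤ Real.exp (-s.re * t) * M :=
            mul_le_mul_of_nonneg_left h1 (Real.exp_nonneg _)
        _ = M * Real.exp (-s.re * t) := mul_comm _ _
    · filter_upwards [ae_restrict_mem measurableSet_Ioi] with t ht
      have h : HasSum (fun α => Complex.exp (-s * t) • Complex.exp (Λ α * t) • g α)
          (Complex.exp (-s * t) • u t) := ((part1 t ht.le).hasSum).const_smul _
      exact Filter.Tendsto.congr (fun F => (Finset.smul_sum).symm) h
  have hT1' := hT1.congr hFint
  exact tendsto_nhds_unique hT1' hres_sum.hasSum
end

section
/- Let H be a complex Hilbert space, p, ℓ ∈ ℕ, ν : Fin p → ℂ with Re ν_i < 0 for all i, and Ω : Fin ℓ → ℝ. Let g : ((Fin p → ℕ) × (Fin ℓ → ℤ)) → H, indexed by pairs (k, m) of multi-indices, be a pairwise orthogonal family with ∑_{(k,m)} ‖g_{k,m}‖² < ∞. Set Λ(k, m) := (∑_i k_i ν_i) + i (∑_j m_j Ω_j). Then: (i) for every t ≥ 0 the series u(t) := ∑_{(k,m)} e^{Λ(k,m) t} g_{k,m} converges in H; (ii) for every s ∈ ℂ with Re s > 0 the function t ↦ e^{-s t}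 u(t) is Bochner integrable on [0,∞), the series ∑_{(k,m)} (s − Λ(k,m))^{-1} g_{k,m} converges in H, and ∫_0^∞ e^{-s t} u(t) dt = ∑_{(k,m)} (s − Λ(k,m))^{-1} g_{k,m}. (This is the spectral expansion of the Koopman resolvent for dynamics converging to a stable quasi-periodic torus with basic frequencies Ω_1,…,Ω_ℓ and quasi-characteristic exponents ν_1,…,ν_p.) -/
open MeasureTheory Set Filter
open scoped InnerProductSpace Topology

section aux
variable {H : Type*} [NormedAddCommGroup H] [InnerProductSpace ℂ H] [CompleteSpace H]
variable {ι : Type*}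

omit [CompleteSpace H] in
lemma aux_orthFam (g : ι → H) (horth : Pairwise fun q r => ⟪g q, g r⟫_ℂ = 0) :
    OrthogonalFamily ℂ (fun q => Submodule.span ℂ {g q})
      (fun q => (Submodule.span ℂ {g q}).subtypeₗᵢ) := by
  intro q r hqr x y
  obtain ⟨c, hc⟩ := Submodule.mem_span_singleton.1 x.2
  obtain ⟨d, hd⟩ := Submodule.mem_span_singleton.1 y.2
  show ⟪(x : H), (y : H)⟫_ℂ = 0
  rw [← hc, ← hd, inner_smul_left, inner_smul_right, horth hqr, mul_zero, mul_zero]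

lemma aux_summable (g : ι → H) (horth : Pairwise fun q r => ⟪g q, g r⟫_ℂ = 0)
    (hsum : Summable fun q => ‖g q‖ ^ 2) (a : ι → ℂ) (C : ℝ) (hC : ∀ q, ‖a q‖ ≤ C) :
    Summable fun q => a q • g q := by
  have hfam := aux_orthFam g horth
  set f : ∀ q, Submodule.span ℂ {g q} := fun q =>
    ⟨a q • g q, Submodule.smul_mem _ _ (Submodule.mem_span_singleton_self _)⟩ with hf
  have hrw : (fun q => a q • g q) = fun q => (Submodule.span ℂ {g q}).subtypeₗᵢ (f q) := rfl
  rw [hrw, hfam.summable_iff_norm_sq_summable]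
  refine Summable.of_nonneg_of_le (fun q => sq_nonneg _) (fun q => ?_) (hsum.mul_left (C ^ 2))
  have : ‖f q‖ = ‖a q‖ * ‖g q‖ := by
    show ‖a q • g q‖ = _; rw [norm_smul]
  rw [this, mul_pow]
  exact mul_le_mul_of_nonneg_right (pow_le_pow_left₀ (norm_nonneg _) (hC q) 2) (sq_nonneg _)

omit [CompleteSpace H] in
lemma aux_norm_sum_le (g : ι → H) (horth : Pairwise fun q r => ⟪g q, g r⟫_ℂ = 0)
    (hsum : Summable fun q => ‖g q‖ ^ 2) (a : ι → ℂ) (C : ℝ) (hC0 : 0 ≤ C)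
    (hC : ∀ q, ‖a q‖ ≤ C) (s : Finset ι) :
    ‖∑ q ∈ s, a q • g q‖ ≤ C * Real.sqrt (∑' q, ‖g q‖ ^ 2) := by
  have hfam := aux_orthFam g horth
  set f : ∀ q, Submodule.span ℂ {g q} := fun q =>
    ⟨a q • g q, Submodule.smul_mem _ _ (Submodule.mem_span_singleton_self _)⟩ with hf
  have h1 : ‖∑ q ∈ s, a q • g q‖ ^ 2 = ∑ q ∈ s, ‖f q‖ ^ 2 := hfam.norm_sum f s
  have h2 : ∑ q ∈ s, ‖f q‖ ^ 2 ≤ C ^ 2 * ∑' q, ‖g q‖ ^ 2 := by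
    have hle : ∑ q ∈ s, ‖f q‖ ^ 2 ≤ ∑ q ∈ s, C ^ 2 * ‖g q‖ ^ 2 := by
      refine Finset.sum_le_sum fun q _ => ?_
      have : ‖f q‖ = ‖a q‖ * ‖g q‖ := by show ‖a q • g q‖ = _; rw [norm_smul]
      rw [this, mul_pow]
      exact mul_le_mul_of_nonneg_right (pow_le_pow_left₀ (norm_nonneg _) (hC q) 2) (sq_nonneg _)
    refine hle.trans ?_
    rw [← Finset.mul_sum]
    gcongr
    exact Summable.sum_le_tsum s (fun q _ => sq_nonneg _) hsum
  have hB : 0 ≤ C * Real.sqrt (∑' q, ‖g q‖ ^ 2) := by positivity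
  have := h1.le.trans h2
  nlinarith [Real.sq_sqrt (tsum_nonneg (fun q : ι => sq_nonneg ‖g q‖) : (0:ℝ) ≤ ∑' q, ‖g q‖ ^ 2),
    Real.sqrt_nonneg (∑' q, ‖g q‖ ^ 2), norm_nonneg (∑ q ∈ s, a q • g q)]

lemma aux_norm_tsum_le (g : ι → H) (horth : Pairwise fun q r => ⟪g q, g r⟫_ℂ = 0)
    (hsum : Summable fun q => ‖g q‖ ^ 2) (a : ι → ℂ) (C : ℝ) (hC0 : 0 ≤ C)
    (hC : ∀ q, ‖a q‖ ≤ C) :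
    ‖∑' q, a q • g q‖ ≤ C * Real.sqrt (∑' q, ‖g q‖ ^ 2) := by
  have hs := aux_summable g horth hsum a C hC
  exact le_of_tendsto' (Filter.Tendsto.norm hs.hasSum)
    (fun t => aux_norm_sum_le g horth hsum a C hC0 hC t)

end aux

lemma aux_integrable_cexp {c : ℂ} (hc : c.re < 0) :
    IntegrableOn (fun t : ℝ => Complex.exp (c * t)) (Ioi 0) := by
  refine Integrable.mono' (exp_neg_integrableOn_Ioi 0 (neg_pos.2 hc)) ?_ ?_
  · exact (Complex.continuous_exp.comp
      (continuous_const.mul Complex.continuous_ofReal)).aestronglyMeasurable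
  · filter_upwards [ae_restrict_mem measurableSet_Ioi] with t _
    rw [Complex.norm_exp]
    simp [Complex.mul_re, mul_comm]

lemma aux_integral_cexp {c : ℂ} (hc : c.re < 0) :
    ∫ t in Ioi (0 : ℝ), Complex.exp (c * t) = -c⁻¹ := by
  have hc0 : c ≠ 0 := fun h => by simp [h] at hc
  have hderiv : ∀ x ∈ Ici (0 : ℝ),
      HasDerivAt (fun t : ℝ => c⁻¹ * Complex.exp (c * t)) (Complex.exp (c * x)) x := by
    intro x _
    have h1 : HasDerivAt (fun t : ℝ => c * (t : ℂ)) c x := by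
      simpa using (Complex.ofRealCLM.hasDerivAt (x := x)).const_mul c
    have h2 := h1.cexp.const_mul c⁻¹
    exact h2.congr_deriv (by rw [mul_comm (Complex.exp _) c, inv_mul_cancel_left₀ hc0])
  have htend : Tendsto (fun t : ℝ => c⁻¹ * Complex.exp (c * t)) atTop (𝓝 0) := by
    rw [tendsto_zero_iff_norm_tendsto_zero]
    have : (fun t : ℝ => ‖c⁻¹ * Complex.exp (c * t)‖) =
        fun t : ℝ => ‖c⁻¹‖ * Real.exp (c.re * t) := by
      funext t
      rw [norm_mul, Complex.norm_exp]
      congr 2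
      simp [Complex.mul_re]
    rw [this]
    rw [show (0:ℝ) = ‖c⁻¹‖ * 0 by ring]
    exact Tendsto.const_mul _
      (Real.tendsto_exp_atBot.comp (tendsto_id.const_mul_atTop_of_neg hc))
  have := integral_Ioi_of_hasDerivAt_of_tendsto' hderiv (aux_integrable_cexp hc) htend
  rw [this]
  simp

abbrev Idx (p ℓ : ℕ) := (Fin p → ℕ) × (Fin ℓ → ℤ)

/-- Spectral expansion of the Koopman resolvent for dynamics converging to a
stable quasi-periodic torus with basic frequencies `Ω 0, …, Ω (ℓ-1)` and
quasi-characteristic exponents `ν 0, …, ν (p-1)` (with negative real parts);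
`g (k, m)` are the orthogonal spectral projections of the observable, indexed
by multi-indices `k : Fin p → ℕ` and `m : Fin ℓ → ℤ`. -/
theorem koopman_resolvent_stable_quasi_periodic_torus
    {H : Type*} [NormedAddCommGroup H] [InnerProductSpace ℂ H] [CompleteSpace H]
    (p ℓ : ℕ) (ν : Fin p → ℂ) (hν : ∀ i, (ν i).re < 0) (Ω : Fin ℓ → ℝ)
    (g : (Fin p → ℕ) × (Fin ℓ → ℤ) → H)
    (horth : Pairwise fun q r => ⟪g q, g r⟫_ℂ = 0)
    (hsum : Summable fun q => ‖g q‖ ^ 2) :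
    (∀ t : ℝ, 0 ≤ t →
      Summable fun q : (Fin p → ℕ) × (Fin ℓ → ℤ) =>
        Complex.exp
          (((∑ i, (q.1 i : ℂ) * ν i) + Complex.I * ∑ j, (q.2 j : ℂ) * (Ω j : ℂ)) * t)
          • g q) ∧
    ∀ s : ℂ, 0 < s.re →
      IntegrableOn
        (fun t : ℝ =>
          Complex.exp (-s * t) •
            ∑' q : (Fin p → ℕ) × (Fin ℓ → ℤ),
              Complex.exp
                (((∑ i, (q.1 i : ℂ) * ν i) +
                    Complex.I * ∑ j, (q.2 j : ℂ) * (Ω j : ℂ)) * t) • g q)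
        (Set.Ioi 0) ∧
      (Summable fun q : (Fin p → ℕ) × (Fin ℓ → ℤ) =>
        (s - ((∑ i, (q.1 i : ℂ) * ν i) +
            Complex.I * ∑ j, (q.2 j : ℂ) * (Ω j : ℂ)))⁻¹ • g q) ∧
      ∫ t in Set.Ioi (0 : ℝ),
          Complex.exp (-s * t) •
            ∑' q : (Fin p → ℕ) × (Fin ℓ → ℤ),
              Complex.exp
                (((∑ i, (q.1 i : ℂ) * ν i) +
                    Complex.I * ∑ j, (q.2 j : ℂ) * (Ω j : ℂ)) * t) • g q
        = ∑' q : (Fin p → ℕ) × (Fin ℓ → ℤ),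
            (s - ((∑ i, (q.1 i : ℂ) * ν i) +
                Complex.I * ∑ j, (q.2 j : ℂ) * (Ω j : ℂ)))⁻¹ • g q := by
  set Λ : Idx p ℓ → ℂ := fun q =>
    (∑ i, (q.1 i : ℂ) * ν i) + Complex.I * ∑ j, (q.2 j : ℂ) * (Ω j : ℂ) with hΛ
  -- real part estimate
  have hre : ∀ q, (Λ q).re ≤ 0 := by
    intro q
    have h1 : (Λ q).re = ∑ i, (q.1 i : ℝ) * (ν i).re := by
      simp [hΛ, Complex.add_re, Complex.re_sum, Complex.im_sum, Complex.mul_re,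
        Complex.mul_im]
    rw [h1]
    refine Finset.sum_nonpos fun i _ => ?_
    exact mul_nonpos_of_nonneg_of_nonpos (Nat.cast_nonneg _) (hν i).le
  have hexp_norm : ∀ (q : Idx p ℓ) (t : ℝ), ‖Complex.exp (Λ q * t)‖ = Real.exp ((Λ q).re * t) := by
    intro q t
    rw [Complex.norm_exp]
    congr 1
    simp [Complex.mul_re]
  have hexp_le : ∀ (q : Idx p ℓ) (t : ℝ), 0 ≤ t → ‖Complex.exp (Λ q * t)‖ ≤ 1 := by
    intro q t ht
    rw [hexp_norm]
    rw [Real.exp_le_one_iff]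
    exact mul_nonpos_of_nonpos_of_nonneg (hre q) ht
  -- part (i)
  have part1 : ∀ t : ℝ, 0 ≤ t → Summable fun q : Idx p ℓ => Complex.exp (Λ q * t) • g q := by
    intro t ht
    exact aux_summable g horth hsum _ 1 (fun q => hexp_le q t ht)
  refine ⟨part1, ?_⟩
  intro s hs
  have hsΛre : ∀ q, (Λ q - s).re < 0 := fun q => by
    have := hre q
    simp only [Complex.sub_re]
    linarith
  have hinv : ∀ q, ‖(s - Λ q)⁻¹‖ ≤ (s.re)⁻¹ := by
    intro q
    rw [norm_inv]
    refine inv_anti₀ hs ?_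
    calc s.re ≤ (s - Λ q).re := by simp only [Complex.sub_re]; linarith [hre q]
      _ ≤ ‖s - Λ q‖ := Complex.re_le_norm _
  have hinv0 : (0:ℝ) ≤ (s.re)⁻¹ := by positivity
  have sumR : Summable fun q : Idx p ℓ => (s - Λ q)⁻¹ • g q :=
    aux_summable g horth hsum _ _ hinv
  -- the function u
  set u : ℝ → H := fun t => ∑' q : Idx p ℓ, Complex.exp (Λ q * t) • g q with hu
  set B : ℝ := Real.sqrt (∑' q : Idx p ℓ, ‖g q‖ ^ 2) with hB
  have hBnn : 0 ≤ B := Real.sqrt_nonneg _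
  have hubd : ∀ t : ℝ, 0 ≤ t → ‖u t‖ ≤ B := by
    intro t ht
    have := aux_norm_tsum_le g horth hsum (fun q => Complex.exp (Λ q * t)) 1 zero_le_one
      (fun q => hexp_le q t ht)
    simpa using this
  -- partial-sum approximants
  set G : Finset (Idx p ℓ) → ℝ → H := fun A t => ∑ q ∈ A, Complex.exp ((Λ q - s) * t) • g q with hG
  have hGeq : ∀ (A : Finset (Idx p ℓ)) (t : ℝ),
      G A t = Complex.exp (-s * t) • ∑ q ∈ A, Complex.exp (Λ q * t) • g q := by
    intro A t
    rw [Finset.smul_sum]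
    refine Finset.sum_congr rfl fun q _ => ?_
    rw [smul_smul, ← Complex.exp_add]
    congr 2
    ring
  have hGbd : ∀ (A : Finset (Idx p ℓ)) (t : ℝ), 0 ≤ t → ‖G A t‖ ≤ B * Real.exp (-s.re * t) := by
    intro A t ht
    rw [hGeq, norm_smul]
    have h1 : ‖Complex.exp (-s * t)‖ = Real.exp (-s.re * t) := by
      rw [Complex.norm_exp]
      congr 1
      simp [Complex.mul_re]
    have h2 : ‖∑ q ∈ A, Complex.exp (Λ q * t) • g q‖ ≤ B := by
      have := aux_norm_sum_le g horth hsum (fun q => Complex.exp (Λ q * t)) 1 zero_le_one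
        (fun q => hexp_le q t ht) A
      simpa using this
    rw [h1]
    calc Real.exp (-s.re * t) * ‖∑ q ∈ A, Complex.exp (Λ q * t) • g q‖
        ≤ Real.exp (-s.re * t) * B := by
          exact mul_le_mul_of_nonneg_left h2 (Real.exp_nonneg _)
      _ = B * Real.exp (-s.re * t) := mul_comm _ _
  have hGmeas : ∀ A : Finset (Idx p ℓ), AEStronglyMeasurable (G A) (volume.restrict (Ioi 0)) := by
    intro A
    refine Continuous.aestronglyMeasurable ?_
    refine continuous_finset_sum _ fun q _ => ?_
    exact (Complex.continuous_exp.comp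
      (continuous_const.mul Complex.continuous_ofReal)).smul continuous_const
  have hbound_int : Integrable (fun t : ℝ => B * Real.exp (-s.re * t))
      (volume.restrict (Ioi 0)) :=
    (exp_neg_integrableOn_Ioi 0 hs).const_mul B
  have hlim : ∀ᵐ t ∂(volume.restrict (Ioi (0:ℝ))),
      Tendsto (fun A : Finset (Idx p ℓ) => G A t) atTop (𝓝 (Complex.exp (-s * t) • u t)) := by
    filter_upwards [ae_restrict_mem measurableSet_Ioi] with t ht
    have hsum_t := (part1 t (le_of_lt ht)).hasSum
    have := hsum_t.const_smul (Complex.exp (-s * t))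
    -- this : HasSum (fun q => exp(-s t) • (exp(Λ q t) • g q)) (exp(-s t) • u t)
    have heq : (fun q : Idx p ℓ => Complex.exp (-s * t) • Complex.exp (Λ q * t) • g q) =
        fun q : Idx p ℓ => Complex.exp ((Λ q - s) * t) • g q := by
      funext q
      rw [smul_smul, ← Complex.exp_add]
      congr 2
      ring
    rw [heq] at this
    exact this
  have hmeas_f : AEStronglyMeasurable (fun t : ℝ => Complex.exp (-s * t) • u t)
      (volume.restrict (Ioi 0)) :=
    aestronglyMeasurable_of_tendsto_ae atTop hGmeas hlim
  have hint_f : IntegrableOn (fun t : ℝ => Complex.exp (-s * t) • u t) (Ioi 0) := by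
    refine Integrable.mono' hbound_int hmeas_f ?_
    filter_upwards [ae_restrict_mem measurableSet_Ioi] with t ht
    rw [norm_smul]
    have h1 : ‖Complex.exp (-s * t)‖ = Real.exp (-s.re * t) := by
      rw [Complex.norm_exp]
      congr 1
      simp [Complex.mul_re]
    rw [h1]
    calc Real.exp (-s.re * t) * ‖u t‖ ≤ Real.exp (-s.re * t) * B :=
          mul_le_mul_of_nonneg_left (hubd t ht.le) (Real.exp_nonneg _)
      _ = B * Real.exp (-s.re * t) := mul_comm _ _
  refine ⟨hint_f, sumR, ?_⟩
  -- dominated convergence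
  have hDCT : Tendsto (fun A : Finset (Idx p ℓ) => ∫ t in Ioi (0:ℝ), G A t) atTop
      (𝓝 (∫ t in Ioi (0:ℝ), Complex.exp (-s * t) • u t)) := by
    refine tendsto_integral_filter_of_dominated_convergence _ (Eventually.of_forall hGmeas)
      (Eventually.of_forall fun A => ?_) hbound_int hlim
    filter_upwards [ae_restrict_mem measurableSet_Ioi] with t ht
    exact hGbd A t ht.le
  have hIG : ∀ A : Finset (Idx p ℓ), ∫ t in Ioi (0:ℝ), G A t = ∑ q ∈ A, (s - Λ q)⁻¹ • g q := by
    intro A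
    rw [hG]
    rw [integral_finset_sum]
    · refine Finset.sum_congr rfl fun q _ => ?_
      rw [integral_smul_const, aux_integral_cexp (hsΛre q), neg_inv, neg_sub]
    · intro q _
      exact (aux_integrable_cexp (hsΛre q)).smul_const (g q)
  rw [funext hIG] at hDCT
  exact tendsto_nhds_unique hDCT sumR.hasSum
end

section
/- Let H be a complex Hilbert space, ι a countable index type, g : ι → H a pairwise orthogonal family with ∑_{j∈ι} ‖g_j‖² < ∞, and λ : ι → ℂ with Re λ_j ≤ 0 for every j ∈ ι. Then: (i) for every t ≥ 0 the series u(t) := ∑_{j∈ι} e^{λ_j t} g_j converges in H; (ii) for every s ∈ ℂ with Re s > 0 the function t ↦ e^{-s t} u(t) is Bochner integrable on [0,∞), the series ∑_{j∈ι} (s − λ_j)^{-1} g_j converges in H, and ∫_0^∞ e^{-s t} u(t) dt = ∑_{j∈ι} (s − λ_j)^{-1} g_j. (This is the common core of the spectral expansion formulae of the Koopman resolvent: a diagonal semigroup with eigenvalues in the closed left half-plane acting on orthogonal spectral components, whose Laplace transform has the resolvent partial-fraction form with region of convergence Re s > 0.) -/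
open MeasureTheory
open scoped InnerProductSpace

set_option linter.unusedSectionVars false

open MeasureTheory Set Filter Topology
open scoped InnerProductSpace

section Aux

variable {H : Type*} [NormedAddCommGroup H] [InnerProductSpace ℂ H] [CompleteSpace H]
variable {ι : Type*} {g : ι → H}

lemma orthFam (horth : Pairwise fun j k => ⟪g j, g k⟫_ℂ = 0) :
    OrthogonalFamily ℂ (fun j => ↥(ℂ ∙ g j)) (fun j => (ℂ ∙ g j).subtypeₗᵢ) := by
  intro j k hjk v w
  obtain ⟨a, ha⟩ := Submodule.mem_span_singleton.mp v.2
  obtain ⟨b, hb⟩ := Submodule.mem_span_singleton.mp w.2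
  show ⟪(v : H), (w : H)⟫_ℂ = 0
  rw [← ha, ← hb, inner_smul_left, inner_smul_right, horth hjk]
  ring

noncomputable def elem (g : ι → H) (c : ι → ℂ) (j : ι) : ↥(ℂ ∙ g j) :=
  ⟨c j • g j, Submodule.smul_mem _ _ (Submodule.mem_span_singleton_self _)⟩

lemma norm_elem (c : ι → ℂ) (j : ι) : ‖elem g c j‖ = ‖c j‖ * ‖g j‖ := by
  have : ‖elem g c j‖ = ‖c j • g j‖ := rfl
  rw [this, norm_smul]

lemma summable_orth_smul (horth : Pairwise fun j k => ⟪g j, g k⟫_ℂ = 0)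
    (hsum : Summable fun j => ‖g j‖ ^ 2) (c : ι → ℂ) {M : ℝ}
    (hc : ∀ j, ‖c j‖ ≤ M) : Summable fun j => c j • g j := by
  have := ((orthFam horth).summable_iff_norm_sq_summable (elem g c)).mpr ?_
  · simpa [elem] using this
  · apply Summable.of_nonneg_of_le (fun j => by positivity)
      (fun j => ?_) (hsum.mul_left (M ^ 2))
    rw [norm_elem, mul_pow]
    have h0 : (0:ℝ) ≤ ‖c j‖ := norm_nonneg _
    have : ‖c j‖ ^ 2 ≤ M ^ 2 := by nlinarith [hc j]
    nlinarith [sq_nonneg (‖g j‖)]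

lemma norm_finset_sum_orth_le (horth : Pairwise fun j k => ⟪g j, g k⟫_ℂ = 0)
    (hsum : Summable fun j => ‖g j‖ ^ 2) (c : ι → ℂ) {M : ℝ} (hM : 0 ≤ M)
    (hc : ∀ j, ‖c j‖ ≤ M) (F : Finset ι) :
    ‖∑ j ∈ F, c j • g j‖ ≤ M * Real.sqrt (∑' j, ‖g j‖ ^ 2) := by
  have hsq : ‖∑ j ∈ F, c j • g j‖ ^ 2 = ∑ j ∈ F, ‖c j • g j‖ ^ 2 := by
    have := (orthFam horth).norm_sum (elem g c) F
    simpa [elem, norm_elem, norm_smul] using this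
  have hb : ∑ j ∈ F, ‖c j • g j‖ ^ 2 ≤ M ^ 2 * ∑' j, ‖g j‖ ^ 2 := by
    calc ∑ j ∈ F, ‖c j • g j‖ ^ 2 ≤ ∑ j ∈ F, M ^ 2 * ‖g j‖ ^ 2 := by
          refine Finset.sum_le_sum fun j _ => ?_
          rw [norm_smul, mul_pow]
          have : ‖c j‖ ^ 2 ≤ M ^ 2 := by nlinarith [hc j, norm_nonneg (c j)]
          nlinarith [sq_nonneg (‖g j‖)]
      _ = M ^ 2 * ∑ j ∈ F, ‖g j‖ ^ 2 := by rw [Finset.mul_sum]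
      _ ≤ M ^ 2 * ∑' j, ‖g j‖ ^ 2 := by
          gcongr
          exact Summable.sum_le_tsum F (fun j _ => by positivity) hsum
  have h1 : ‖∑ j ∈ F, c j • g j‖ = Real.sqrt (‖∑ j ∈ F, c j • g j‖ ^ 2) := by
    rw [Real.sqrt_sq (norm_nonneg _)]
  rw [h1, hsq]
  calc Real.sqrt (∑ j ∈ F, ‖c j • g j‖ ^ 2) ≤ Real.sqrt (M ^ 2 * ∑' j, ‖g j‖ ^ 2) :=
        Real.sqrt_le_sqrt hb
    _ = M * Real.sqrt (∑' j, ‖g j‖ ^ 2) := by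
        rw [Real.sqrt_mul (by positivity), Real.sqrt_sq hM]

lemma norm_tsum_orth_le (horth : Pairwise fun j k => ⟪g j, g k⟫_ℂ = 0)
    (hsum : Summable fun j => ‖g j‖ ^ 2) (c : ι → ℂ) {M : ℝ} (hM : 0 ≤ M)
    (hc : ∀ j, ‖c j‖ ≤ M) :
    ‖∑' j, c j • g j‖ ≤ M * Real.sqrt (∑' j, ‖g j‖ ^ 2) := by
  have hs := summable_orth_smul horth hsum c hc
  exact le_of_tendsto' hs.hasSum.norm
    (fun F => norm_finset_sum_orth_le horth hsum c hM hc F)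

lemma integrableOn_cexp_Ioi_s5 {c : ℂ} (hc : c.re < 0) :
    IntegrableOn (fun t : ℝ => Complex.exp (c * t)) (Ioi (0:ℝ)) := by
  apply (integrable_norm_iff ?_).mp
  · simp only [Complex.norm_exp]
    have : ∀ t : ℝ, (c * t).re = -(-c.re) * t := by intro t; simp [Complex.mul_re]
    simp only [this]
    exact exp_neg_integrableOn_Ioi 0 (by linarith)
  · exact (Complex.continuous_exp.comp (by continuity)).aestronglyMeasurable

lemma integral_cexp_Ioi_eq {c : ℂ} (hc : c.re < 0) :
    ∫ t in Ioi (0:ℝ), Complex.exp (c * t) = -c⁻¹ := by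
  have hc0 : c ≠ 0 := fun h => by simp [h] at hc
  have hder : ∀ x ∈ Ici (0:ℝ), HasDerivAt (fun t : ℝ => c⁻¹ * Complex.exp (c * t))
      (Complex.exp (c * x)) x := by
    intro x _
    have h1 : HasDerivAt (fun z : ℂ => c⁻¹ * Complex.exp (c * z))
        (c⁻¹ * (Complex.exp (c * x) * c)) (x : ℂ) := by
      simpa using (((hasDerivAt_id ((x : ℝ) : ℂ)).const_mul c).cexp).const_mul c⁻¹
    have h2 := h1.comp_ofReal
    have : c⁻¹ * (Complex.exp (c * x) * c) = Complex.exp (c * x) := by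
      field_simp
    rwa [this] at h2
  have hlim : Tendsto (fun t : ℝ => c⁻¹ * Complex.exp (c * t)) atTop (𝓝 0) := by
    rw [tendsto_zero_iff_norm_tendsto_zero]
    simp only [norm_mul, Complex.norm_exp]
    have hre : ∀ t : ℝ, (c * t).re = c.re * t := by intro t; simp [Complex.mul_re]
    simp only [hre]
    have h3 : Tendsto (fun t : ℝ => Real.exp (c.re * t)) atTop (𝓝 0) := by
      rw [Real.tendsto_exp_comp_nhds_zero]
      exact (tendsto_const_mul_atBot_of_neg hc).mpr tendsto_id
    simpa using h3.const_mul ‖c⁻¹‖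
  have := integral_Ioi_of_hasDerivAt_of_tendsto' hder (integrableOn_cexp_Ioi_s5 hc) hlim
  rw [this]; simp

end Aux

/-- Common core of the spectral expansion formulae of the Koopman resolvent:
a diagonal semigroup with eigenvalues in the closed left half-plane acting on
orthogonal spectral components; its Laplace transform has the resolvent
partial-fraction form with region of convergence `Re s > 0`. -/
theorem koopman_resolvent_diagonal_core
    {H : Type*} [NormedAddCommGroup H] [InnerProductSpace ℂ H] [CompleteSpace H]
    {ι : Type*} [Countable ι] (g : ι → H) (lam : ι → ℂ)
    (horth : Pairwise fun j k => ⟪g j, g k⟫_ℂ = 0)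
    (hsum : Summable fun j => ‖g j‖ ^ 2)
    (hre : ∀ j, (lam j).re ≤ 0) :
    (∀ t : ℝ, 0 ≤ t → Summable fun j => Complex.exp (lam j * t) • g j) ∧
    ∀ s : ℂ, 0 < s.re →
      IntegrableOn
        (fun t : ℝ => Complex.exp (-s * t) • ∑' j, Complex.exp (lam j * t) • g j)
        (Set.Ioi 0) ∧
      (Summable fun j => (s - lam j)⁻¹ • g j) ∧
      ∫ t in Set.Ioi (0 : ℝ),
          Complex.exp (-s * t) • ∑' j, Complex.exp (lam j * t) • g j
        = ∑' j, (s - lam j)⁻¹ • g j := by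
  classical
  have hcoef : ∀ t : ℝ, 0 ≤ t → ∀ j, ‖Complex.exp (lam j * t)‖ ≤ 1 := by
    intro t ht j
    rw [Complex.norm_exp]
    have hre' : (lam j * t).re = (lam j).re * t := by simp [Complex.mul_re]
    rw [hre']
    calc Real.exp ((lam j).re * t) ≤ Real.exp 0 := by
          apply Real.exp_le_exp.mpr
          exact mul_nonpos_of_nonpos_of_nonneg (hre j) ht
      _ = 1 := Real.exp_zero
  have part1 : ∀ t : ℝ, 0 ≤ t → Summable fun j => Complex.exp (lam j * t) • g j :=
    fun t ht => summable_orth_smul horth hsum _ (hcoef t ht)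
  refine ⟨part1, ?_⟩
  intro s hs
  set C : ℝ := Real.sqrt (∑' j, ‖g j‖ ^ 2) with hC
  set u : ℝ → H := fun t => ∑' j, Complex.exp (lam j * t) • g j with hu
  have hubound : ∀ t : ℝ, 0 ≤ t → ‖u t‖ ≤ C := by
    intro t ht
    simpa using norm_tsum_orth_le horth hsum _ zero_le_one (hcoef t ht)
  -- enumeration
  obtain ⟨e, he⟩ := (inferInstance : Countable ι).exists_injective_nat'
  set F : ℕ → Finset ι := fun n =>
    Set.Finite.toFinset (Set.Finite.preimage he.injOn (Set.finite_Iio n)) with hF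
  have hmemF : ∀ j n, j ∈ F n ↔ e j < n := by
    intro j n
    simp [hF, Set.Finite.mem_toFinset]
  have hmono : Monotone F := by
    intro m n hmn j hj
    rw [hmemF] at *
    exact lt_of_lt_of_le hj hmn
  have hFtend : Filter.Tendsto F Filter.atTop Filter.atTop :=
    Filter.tendsto_atTop_finset_of_monotone hmono
      (fun j => ⟨e j + 1, (hmemF j _).mpr (Nat.lt_succ_self _)⟩)
  set S : ℕ → ℝ → H := fun n t => ∑ j ∈ F n, Complex.exp (lam j * t) • g j with hS
  have hStend : ∀ t : ℝ, 0 ≤ t →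
      Filter.Tendsto (fun n => S n t) Filter.atTop (nhds (u t)) :=
    fun t ht => (part1 t ht).hasSum.comp hFtend
  have hSbound : ∀ n (t : ℝ), 0 ≤ t → ‖S n t‖ ≤ C := by
    intro n t ht
    simpa using norm_finset_sum_orth_le horth hsum _ zero_le_one (hcoef t ht) (F n)
  -- measurability
  have hcont : Continuous fun t : ℝ => Complex.exp (-s * t) :=
    Complex.continuous_exp.comp (continuous_const.mul Complex.continuous_ofReal)
  have hSmeas : ∀ n : ℕ, AEStronglyMeasurable (fun t : ℝ => Complex.exp (-s * t) • S n t)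
      (volume.restrict (Set.Ioi 0)) := by
    intro n
    apply Continuous.aestronglyMeasurable
    exact hcont.smul (continuous_finset_sum _ fun j _ =>
      (Complex.continuous_exp.comp (continuous_const.mul Complex.continuous_ofReal)).smul
        continuous_const)
  have hfmeas : AEStronglyMeasurable (fun t : ℝ => Complex.exp (-s * t) • u t)
      (volume.restrict (Set.Ioi 0)) := by
    apply aestronglyMeasurable_of_tendsto_ae Filter.atTop hSmeas
    filter_upwards [ae_restrict_mem measurableSet_Ioi] with t ht
    exact Filter.Tendsto.const_smul (hStend t (le_of_lt ht)) _
  -- domination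
  have hnorm_exp : ∀ t : ℝ, ‖Complex.exp (-s * t)‖ = Real.exp (-s.re * t) := by
    intro t
    rw [Complex.norm_exp]
    congr 1
    simp [Complex.mul_re]
  have hbndint : IntegrableOn (fun t : ℝ => C * Real.exp (-s.re * t)) (Set.Ioi 0) :=
    (exp_neg_integrableOn_Ioi 0 hs).const_mul C
  have hfbound : ∀ᵐ (t : ℝ) ∂(volume.restrict (Set.Ioi (0:ℝ))),
      ‖Complex.exp (-s * t) • u t‖ ≤ C * Real.exp (-s.re * t) := by
    filter_upwards [ae_restrict_mem measurableSet_Ioi] with t ht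
    rw [norm_smul, hnorm_exp]
    rw [mul_comm]
    gcongr
    exact hubound t (le_of_lt ht)
  have hint : IntegrableOn (fun t : ℝ => Complex.exp (-s * t) • u t) (Set.Ioi 0) :=
    Integrable.mono' hbndint hfmeas hfbound
  -- summability of resolvent series
  have hcoef2 : ∀ j, ‖(s - lam j)⁻¹‖ ≤ s.re⁻¹ := by
    intro j
    rw [norm_inv]
    have h1 : s.re ≤ ‖s - lam j‖ := by
      have : s.re ≤ (s - lam j).re := by
        rw [Complex.sub_re]; linarith [hre j]
      exact this.trans (Complex.re_le_norm _)
    exact inv_anti₀ hs h1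
  have hsummable2 : Summable fun j => (s - lam j)⁻¹ • g j :=
    summable_orth_smul horth hsum _ hcoef2
  -- per-term integral
  have hlt : ∀ j, (lam j - s).re < 0 := by
    intro j
    rw [Complex.sub_re]; linarith [hre j]
  have hrw : ∀ (j) (t : ℝ), Complex.exp (-s * t) • (Complex.exp (lam j * t) • g j)
      = Complex.exp ((lam j - s) * t) • g j := by
    intro j t
    rw [smul_smul, ← Complex.exp_add]
    congr 2
    ring
  have htermint : ∀ j, IntegrableOn
      (fun t : ℝ => Complex.exp ((lam j - s) * t) • g j) (Set.Ioi 0) :=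
    fun j => (integrableOn_cexp_Ioi_s5 (hlt j)).smul_const (g j)
  have hterm : ∀ j, (∫ t in Set.Ioi (0:ℝ), Complex.exp ((lam j - s) * t) • g j)
      = (s - lam j)⁻¹ • g j := by
    intro j
    rw [integral_smul_const, integral_cexp_Ioi_eq (hlt j)]
    congr 1
    rw [← inv_neg, neg_sub]
  have hIn : ∀ n, (∫ t in Set.Ioi (0:ℝ), Complex.exp (-s * t) • S n t)
      = ∑ j ∈ F n, (s - lam j)⁻¹ • g j := by
    intro n
    have heq : ∀ t : ℝ, Complex.exp (-s * t) • S n t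
        = ∑ j ∈ F n, Complex.exp ((lam j - s) * t) • g j := by
      intro t
      rw [hS, Finset.smul_sum]
      exact Finset.sum_congr rfl fun j _ => hrw j t
    simp only [heq]
    rw [MeasureTheory.integral_finset_sum _ (fun j _ => htermint j)]
    exact Finset.sum_congr rfl fun j _ => hterm j
  -- dominated convergence
  have hDCT : Filter.Tendsto (fun n => ∫ t in Set.Ioi (0:ℝ), Complex.exp (-s * t) • S n t)
      Filter.atTop (nhds (∫ t in Set.Ioi (0:ℝ), Complex.exp (-s * t) • u t)) := by
    apply MeasureTheory.tendsto_integral_of_dominated_convergence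
      (fun t => C * Real.exp (-s.re * t)) hSmeas hbndint
    · intro n
      filter_upwards [ae_restrict_mem measurableSet_Ioi] with t ht
      rw [norm_smul, hnorm_exp, mul_comm]
      gcongr
      exact hSbound n t (le_of_lt ht)
    · filter_upwards [ae_restrict_mem measurableSet_Ioi] with t ht
      exact Filter.Tendsto.const_smul (hStend t (le_of_lt ht)) _
  have hlim2 : Filter.Tendsto (fun n => ∑ j ∈ F n, (s - lam j)⁻¹ • g j)
      Filter.atTop (nhds (∑' j, (s - lam j)⁻¹ • g j)) :=
    hsummable2.hasSum.comp hFtend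
  refine ⟨hint, hsummable2, ?_⟩
  have hDCT' : Filter.Tendsto (fun n => ∑ j ∈ F n, (s - lam j)⁻¹ • g j)
      Filter.atTop (nhds (∫ t in Set.Ioi (0:ℝ), Complex.exp (-s * t) • u t)) := by
    refine hDCT.congr fun n => hIn n
  exact tendsto_nhds_unique hDCT' hlim2
end

section
/- Let 𝒜 be a complex unital Banach algebra, a ∈ 𝒜, and s ∈ ℂ with Re s > ‖a‖. Then s·1 − a is invertible in 𝒜, the 𝒜-valued function t ↦ e^{-s t} exp(t a) is Bochner integrable on [0,∞), and (s·1 − a)^{-1} = ∫_0^∞ e^{-s t} exp(t a) dt. (Integral representation of the resolvent of a bounded generator: the resolvent is the Laplace transform of the semigroup exp(t a).) -/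
open MeasureTheory

open scoped Topology

lemma norm_nsexp_le {𝒜 : Type*} [NormedRing 𝒜] [NormedAlgebra ℂ 𝒜] [CompleteSpace 𝒜]
    (x : 𝒜) : ‖NormedSpace.exp x‖ ≤ ‖(1 : 𝒜)‖ * Real.exp ‖x‖ := by
  rw [NormedSpace.exp_eq_tsum ℂ]
  have hsum : Summable fun n : ℕ => ‖((n.factorial : ℂ))⁻¹ • x ^ n‖ :=
    NormedSpace.norm_expSeries_summable' x
  refine (norm_tsum_le_tsum_norm hsum).trans ?_
  have hb : Summable fun n : ℕ => ‖(1 : 𝒜)‖ * (‖x‖ ^ n / n.factorial) :=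
    (Real.summable_pow_div_factorial ‖x‖).mul_left _
  have hle : ∀ n : ℕ, ‖((n.factorial : ℂ))⁻¹ • x ^ n‖ ≤ ‖(1 : 𝒜)‖ * (‖x‖ ^ n / n.factorial) := by
    intro n
    rw [norm_smul, norm_inv, Complex.norm_natCast]
    have hxn : ‖x ^ n‖ ≤ ‖(1 : 𝒜)‖ * ‖x‖ ^ n := by
      cases n with
      | zero => simp
      | succ m =>
        calc ‖x ^ (m + 1)‖ = ‖1 * x ^ (m + 1)‖ := by rw [one_mul]
          _ ≤ ‖(1 : 𝒜)‖ * ‖x ^ (m + 1)‖ := norm_mul_le _ _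
          _ ≤ ‖(1 : 𝒜)‖ * ‖x‖ ^ (m + 1) := by
              gcongr
              exact norm_pow_le' x m.succ_pos
    calc ((n.factorial : ℝ))⁻¹ * ‖x ^ n‖
        ≤ ((n.factorial : ℝ))⁻¹ * (‖(1 : 𝒜)‖ * ‖x‖ ^ n) := by
          gcongr
      _ = ‖(1 : 𝒜)‖ * (‖x‖ ^ n / n.factorial) := by ring
  refine (Summable.tsum_le_tsum hle hsum hb).trans_eq ?_
  rw [tsum_mul_left, Real.exp_eq_exp_ℝ, NormedSpace.exp_eq_tsum_div]

/-- Integral representation of the resolvent of a bounded generator: for an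
element `a` of a complex unital Banach algebra and `Re s > ‖a‖`, the element
`s • 1 - a` is invertible and its inverse is the Laplace transform of the
semigroup `t ↦ exp(t a)`. -/
theorem resolvent_eq_laplace_transform_of_semigroup
    {𝒜 : Type*} [NormedRing 𝒜] [NormedAlgebra ℂ 𝒜] [CompleteSpace 𝒜]
    (a : 𝒜) (s : ℂ) (hs : ‖a‖ < s.re) :
    IsUnit (s • (1 : 𝒜) - a) ∧
    IntegrableOn
      (fun t : ℝ => Complex.exp (-s * t) • NormedSpace.exp ((t : ℝ) • a))
      (Set.Ioi 0) ∧
    Ring.inverse (s • (1 : 𝒜) - a)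
      = ∫ t in Set.Ioi (0 : ℝ), Complex.exp (-s * t) • NormedSpace.exp ((t : ℝ) • a) := by
  have hc : 0 < s.re - ‖a‖ := by linarith
  set b : 𝒜 := s • (1 : 𝒜) - a with hbdef
  set g : ℝ → 𝒜 := fun t => Complex.exp (-s * t) • NormedSpace.exp ((t : ℝ) • a) with hgdef
  -- pointwise norm bound
  have hbound : ∀ t : ℝ, 0 ≤ t → ‖g t‖ ≤ ‖(1 : 𝒜)‖ * Real.exp (-(s.re - ‖a‖) * t) := by
    intro t ht
    have h1 : ‖Complex.exp (-s * t)‖ = Real.exp (-s.re * t) := by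
      rw [Complex.norm_exp]
      congr 1
      simp [Complex.mul_re]
    have h2 : ‖NormedSpace.exp ((t : ℝ) • a)‖ ≤ ‖(1 : 𝒜)‖ * Real.exp (t * ‖a‖) := by
      refine (norm_nsexp_le _).trans_eq ?_
      rw [norm_smul, Real.norm_of_nonneg ht]
    calc ‖g t‖ = ‖Complex.exp (-s * t)‖ * ‖NormedSpace.exp ((t : ℝ) • a)‖ := norm_smul _ _
      _ ≤ Real.exp (-s.re * t) * (‖(1 : 𝒜)‖ * Real.exp (t * ‖a‖)) := by
          rw [h1]
          exact mul_le_mul_of_nonneg_left h2 (Real.exp_nonneg _)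
      _ = ‖(1 : 𝒜)‖ * Real.exp (-(s.re - ‖a‖) * t) := by
          rw [mul_left_comm, ← Real.exp_add]
          congr 2
          ring
  have hcontg : Continuous g := by
    apply Continuous.smul
    · exact Complex.continuous_exp.comp (by continuity)
    · exact (continuous_iff_continuousAt.2 fun x => (NormedSpace.exp_analytic (𝕂 := ℂ) x).continuousAt).comp (by continuity)
  -- integrability
  have hint : IntegrableOn g (Set.Ioi 0) := by
    refine Integrable.mono' ((exp_neg_integrableOn_Ioi 0 hc).const_mul ‖(1 : 𝒜)‖)
      hcontg.aestronglyMeasurable.restrict ?_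
    filter_upwards [ae_restrict_mem measurableSet_Ioi] with t ht
    exact hbound t ht.le
  -- derivative
  have hcomm : ∀ t : ℝ, a * NormedSpace.exp ((t : ℝ) • a) = NormedSpace.exp ((t : ℝ) • a) * a :=
    fun t => (((Commute.refl a).smul_right (t : ℝ)).exp_right).eq
  have hform : ∀ t : ℝ,
      Complex.exp (-s * t) • (NormedSpace.exp ((t : ℝ) • a) * a)
        + (Complex.exp (-s * t) * (-s)) • NormedSpace.exp ((t : ℝ) • a) = -(b * g t) := by
    intro t
    rw [hbdef, hgdef]
    simp only [sub_mul, smul_mul_assoc, one_mul, mul_smul_comm, ← hcomm t, smul_smul]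
    module
  have hderiv : ∀ t : ℝ, HasDerivAt g (-(b * g t)) t := by
    intro t
    rw [← hform t]
    have h1 : HasDerivAt (fun u : ℝ => Complex.exp (-s * u)) (Complex.exp (-s * t) * (-s)) t := by
      have h0 : HasDerivAt (fun u : ℝ => -s * (u : ℂ)) (-s) t := by
        simpa using (Complex.ofRealCLM.hasDerivAt (x := t)).const_mul (-s)
      exact h0.cexp
    have h2 : HasDerivAt (fun u : ℝ => NormedSpace.exp ((u : ℝ) • a))
        (NormedSpace.exp ((t : ℝ) • a) * a) t := by
      have := hasDerivAt_exp_smul_const (𝕂 := ℝ) a t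
      simpa using this
    exact h1.smul h2
  -- tendsto 0 at infinity
  have htend : Filter.Tendsto g Filter.atTop (𝓝 (0 : 𝒜)) := by
    have hb' : ∀ᶠ t : ℝ in Filter.atTop,
        ‖g t‖ ≤ ‖(1 : 𝒜)‖ * Real.exp (-(s.re - ‖a‖) * t) := by
      filter_upwards [Filter.eventually_ge_atTop (0 : ℝ)] with t ht using hbound t ht
    have h3 : Filter.Tendsto (fun t : ℝ => Real.exp (-(s.re - ‖a‖) * t)) Filter.atTop (𝓝 0) := by
      have h4 : Filter.Tendsto (fun t : ℝ => -(s.re - ‖a‖) * t) Filter.atTop Filter.atBot :=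
        Filter.Tendsto.const_mul_atTop_of_neg (by linarith) Filter.tendsto_id
      exact Real.tendsto_exp_atBot.comp h4
    have h5 : Filter.Tendsto (fun t : ℝ => ‖(1 : 𝒜)‖ * Real.exp (-(s.re - ‖a‖) * t))
        Filter.atTop (𝓝 0) := by simpa using h3.const_mul ‖(1 : 𝒜)‖
    exact squeeze_zero_norm' hb' h5
  -- integrability of the derivative
  have hint' : IntegrableOn (fun t => -(b * g t)) (Set.Ioi 0) :=
    ((ContinuousLinearMap.mul ℂ 𝒜 b).integrable_comp hint).neg
  -- FTC on [0, ∞)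
  have hg0 : g 0 = 1 := by
    simp [hgdef]
  have hI := integral_Ioi_of_hasDerivAt_of_tendsto (f := g) (f' := fun t => -(b * g t))
    hcontg.continuousWithinAt (fun x _ => hderiv x) hint' htend
  rw [hg0, zero_sub] at hI
  have hkey : ∫ t in Set.Ioi (0 : ℝ), b * g t = 1 := by
    rw [integral_neg] at hI
    exact neg_injective hI
  set I : 𝒜 := ∫ t in Set.Ioi (0 : ℝ), g t with hIdef
  have hbI : b * I = 1 := by
    have h6 := (ContinuousLinearMap.mul ℂ 𝒜 b).integral_comp_comm hint
    simp only [ContinuousLinearMap.mul_apply'] at h6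
    rw [hIdef, ← h6]
    exact hkey
  have hcommbg : ∀ t : ℝ, g t * b = b * g t := by
    intro t
    rw [hgdef, hbdef]
    have h4 : Commute (s • (1 : 𝒜) - a) (NormedSpace.exp ((t : ℝ) • a)) := by
      refine Commute.sub_left ?_ ?_
      · exact (Commute.one_left _).smul_left s
      · exact ((Commute.refl a).smul_right (t : ℝ)).exp_right
    simp only [mul_smul_comm, smul_mul_assoc, h4.eq]
  have hIb : I * b = 1 := by
    have h5 : (∫ t in Set.Ioi (0 : ℝ), g t * b) = I * b := by
      have h6 := ((ContinuousLinearMap.mul ℂ 𝒜).flip b).integral_comp_comm hint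
      simp only [ContinuousLinearMap.flip_apply, ContinuousLinearMap.mul_apply'] at h6
      rw [hIdef, h6]
    rw [← h5]
    rw [← hkey]
    exact setIntegral_congr_fun measurableSet_Ioi fun t _ => hcommbg t
  refine ⟨⟨⟨b, I, hbI, hIb⟩, rfl⟩, hint, ?_⟩
  exact Ring.inverse_unit ⟨b, I, hbI, hIb⟩
end
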